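/- Under the stated assumptions, the function v := m + Q has vanishing residue at each of the four points −p₁, p₁ + πi, p₁ − πi and −p₁ + 2πi; precisely, for each such point a, (w − a)·(m(w) + Q(w)) tends to 0 as w → a (w ≠ a). (The singularities of m at these points are cancelled by Q, so that v̂₁¹ = m + Q is analytic there, as required by the necessary-and-sufficient conditions for the solution.) -/

import Mathlib

open Complex Filter Topology

/-- The complex hyperbolic cotangent. -/
noncomputable def Complex.coth (z : ℂ) : ℂ := Complex.cosh z / Complex.sinh z

lemma sinh_ne_zero_of_re {z : ℂ} (h : z.re ≠ 0) : Complex.sinh z ≠ 0 := by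
  intro h0
  have h1 : Complex.exp z = Complex.exp (-z) := by
    have h2 : (Complex.exp z - Complex.exp (-z)) / 2 = 0 := by
      rw [← Complex.sinh]; exact h0
    have := (div_eq_zero_iff.mp h2).resolve_right (by norm_num)
    linear_combination this
  have h3 := congrArg norm h1
  rw [Complex.norm_exp, Complex.norm_exp, Complex.neg_re, Real.exp_eq_exp] at h3
  exact h (by linarith)

lemma sinh_ne_A (p : ℂ) (hre : p.re ≠ 0) (c y : ℝ) (hc : c ≠ 0) (z : ℂ)
    (hz : z = ((c : ℂ) * p + (y : ℂ) * I) / 3) : Complex.sinh z ≠ 0 := by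
  apply sinh_ne_zero_of_re
  rw [hz]
  have : (((c : ℂ) * p + (y : ℂ) * I) / 3).re = c * p.re / 3 := by
    simp [Complex.div_re, Complex.add_re, Complex.mul_re, Complex.normSq]
  rw [this]
  exact div_ne_zero (mul_ne_zero hc hre) (by norm_num)

lemma sinh_I_pi_ne {x : ℝ} (h1 : 0 < x) (h2 : x < Real.pi) :
    Complex.sinh ((x : ℂ) * I) ≠ 0 := by
  rw [Complex.sinh_mul_I]
  have hx : Complex.sin (x : ℂ) = (Real.sin x : ℂ) := by rw [← Complex.ofReal_sin]
  rw [hx]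
  simp only [ne_eq, mul_eq_zero, Complex.I_ne_zero, or_false, Complex.ofReal_eq_zero]
  exact ne_of_gt (Real.sin_pos_of_pos_of_lt_pi h1 h2)

lemma tendsto_sub_div (g : ℂ → ℂ) (a g' : ℂ) (h : HasDerivAt g g' a)
    (h0 : g a = 0) (h' : g' ≠ 0) :
    Tendsto (fun w => (w - a) / g w) (𝓝[≠] a) (𝓝 g'⁻¹) := by
  have h1 : Tendsto (slope g a) (𝓝[≠] a) (𝓝 g') := hasDerivAt_iff_tendsto_slope.mp h
  have h2 := h1.inv₀ h'
  refine h2.congr fun w => ?_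
  rw [slope_def_field, h0, sub_zero, inv_div]

lemma coth_lim_sing (c a b : ℂ) (F : ℂ → ℂ) (hF : ∀ w, F w = w - b)
    (h : Complex.sinh ((a - b) / 3) = 0) :
    Tendsto (fun w => (w - a) * (c * Complex.coth (F w / 3))) (𝓝[≠] a) (𝓝 (3 * c)) := by
  have hc : Complex.cosh ((a - b) / 3) ≠ 0 := by
    intro h'
    have h1 := Complex.cosh_sq_sub_sinh_sq ((a - b) / 3)
    rw [h, h'] at h1; norm_num at h1
  have hd : HasDerivAt (fun w => Complex.sinh ((w - b) / 3))
      (Complex.cosh ((a - b) / 3) * (1 / 3)) a := by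
    have h1 : HasDerivAt (fun w : ℂ => (w - b) / 3) (1 / 3) a := by
      simpa using ((hasDerivAt_id a).sub_const b).div_const 3
    exact (Complex.hasDerivAt_sinh ((a - b) / 3)).comp a h1
  have h2 := tendsto_sub_div _ a _ hd h (by simp [hc])
  have hcont : Continuous (fun w : ℂ => c * Complex.cosh ((w - b) / 3)) := by
    continuity
  have h3 : Tendsto (fun w => c * Complex.cosh ((w - b) / 3)) (𝓝[≠] a)
      (𝓝 (c * Complex.cosh ((a - b) / 3))) :=
    hcont.continuousAt.tendsto.mono_left nhdsWithin_le_nhds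
  have h4 := h3.mul h2
  have hval : c * Complex.cosh ((a - b) / 3) * (Complex.cosh ((a - b) / 3) * (1 / 3))⁻¹
      = 3 * c := by
    field_simp
  rw [hval] at h4
  refine h4.congr fun w => ?_
  rw [hF, Complex.coth]
  ring

lemma coth_lim_reg (c a b : ℂ) (F : ℂ → ℂ) (hF : ∀ w, F w = w - b)
    (h : Complex.sinh ((a - b) / 3) ≠ 0) :
    Tendsto (fun w => (w - a) * (c * Complex.coth (F w / 3))) (𝓝[≠] a) (𝓝 0) := by
  have hca : ContinuousAt (fun w => (w - a) * (c * Complex.coth ((w - b) / 3))) a := by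
    apply ContinuousAt.mul
    · fun_prop
    apply ContinuousAt.mul continuousAt_const
    exact ContinuousAt.div (by fun_prop) (by fun_prop) h
  have h5 : Tendsto (fun w => (w - a) * (c * Complex.coth ((w - b) / 3))) (𝓝[≠] a)
      (𝓝 ((a - a) * (c * Complex.coth ((a - b) / 3)))) :=
    hca.tendsto.mono_left nhdsWithin_le_nhds
  simp only [sub_self, zero_mul] at h5
  refine h5.congr fun w => ?_
  rw [hF]

lemma m_lim (ω k : ℂ) (hω : ω ≠ 0) (m : ℂ → ℂ)
    (hm : ∀ w : ℂ, m w = ((Real.pi + 2 * I * w) / (6 * Real.pi)) *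
      (I * ω ^ 2 * Complex.sinh (2 * w) / (ω ^ 2 * (Complex.sinh w) ^ 2 + k ^ 2)))
    (a : ℂ) (ha : ω ^ 2 * (Complex.sinh a) ^ 2 + k ^ 2 = 0)
    (hs : Complex.sinh a ≠ 0) (hc : Complex.cosh a ≠ 0) :
    Tendsto (fun w => (w - a) * m w) (𝓝[≠] a)
      (𝓝 (I * ((Real.pi : ℂ) + 2 * I * a) / (6 * Real.pi))) := by
  have hπ : (Real.pi : ℂ) ≠ 0 := Complex.ofReal_ne_zero.mpr Real.pi_ne_zero
  have hd : HasDerivAt (fun w => ω ^ 2 * (Complex.sinh w) ^ 2 + k ^ 2)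
      (ω ^ 2 * (2 * Complex.sinh a ^ 1 * Complex.cosh a)) a := by
    have h1 := (((Complex.hasDerivAt_sinh a).pow 2).const_mul (ω ^ 2)).add_const (k ^ 2)
    simpa using h1
  have hD' : ω ^ 2 * (2 * Complex.sinh a ^ 1 * Complex.cosh a) ≠ 0 := by
    apply mul_ne_zero (pow_ne_zero 2 hω)
    apply mul_ne_zero (mul_ne_zero two_ne_zero (by simpa using hs)) hc
  have h2 := tendsto_sub_div _ a _ hd ha hD'
  have hcont : Tendsto
      (fun w => ((Real.pi : ℂ) + 2 * I * w) / (6 * Real.pi) * (I * ω ^ 2 * Complex.sinh (2 * w)))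
      (𝓝[≠] a)
      (𝓝 (((Real.pi : ℂ) + 2 * I * a) / (6 * Real.pi) * (I * ω ^ 2 * Complex.sinh (2 * a)))) := by
    apply Tendsto.mono_left _ nhdsWithin_le_nhds
    exact (Continuous.continuousAt (by fun_prop)).tendsto
  have h4 := hcont.mul h2
  have hval : ((Real.pi : ℂ) + 2 * I * a) / (6 * Real.pi) * (I * ω ^ 2 * Complex.sinh (2 * a)) *
      (ω ^ 2 * (2 * Complex.sinh a ^ 1 * Complex.cosh a))⁻¹
      = I * ((Real.pi : ℂ) + 2 * I * a) / (6 * Real.pi) := by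
    rw [Complex.sinh_two_mul]
    calc ((Real.pi : ℂ) + 2 * I * a) / (6 * Real.pi) * (I * ω ^ 2 * (2 * Complex.sinh a * Complex.cosh a)) *
          (ω ^ 2 * (2 * Complex.sinh a ^ 1 * Complex.cosh a))⁻¹
        = (((Real.pi : ℂ) + 2 * I * a) / (6 * Real.pi) * I) *
          ((ω ^ 2 * (2 * Complex.sinh a ^ 1 * Complex.cosh a)) *
            (ω ^ 2 * (2 * Complex.sinh a ^ 1 * Complex.cosh a))⁻¹) := by ring
      _ = I * ((Real.pi : ℂ) + 2 * I * a) / (6 * Real.pi) := by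
          rw [mul_inv_cancel₀ hD']; ring
  rw [hval] at h4
  refine h4.congr fun w => ?_
  rw [hm]
  ring

theorem v_has_vanishing_residues_at_removable_points
    (ω : ℂ) (hω : 0 < ω.im) (k : ℝ) (hk : 0 < k)
    (G₂ m : ℂ → ℂ)
    (hG₂ : ∀ w : ℂ, G₂ w = I * ω ^ 2 * Complex.sinh (2 * w) /
      (ω ^ 2 * (Complex.sinh w) ^ 2 + (k : ℂ) ^ 2))
    (hm : ∀ w : ℂ, m w = ((Real.pi + 2 * I * w) / (6 * Real.pi)) * G₂ w)
    (p₁ : ℂ) (hp : Complex.sinh p₁ = I * k / ω) (hc : Complex.cosh p₁ ≠ 0)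
    (hre : p₁.re ≠ 0)
    (m₁ m₂ m₃ : ℂ)
    (hm₁ : m₁ = -p₁ / (3 * Real.pi) + I / 6)
    (hm₂ : m₂ = -p₁ / (3 * Real.pi) - I / 6)
    (hm₃ : m₃ = -p₁ / (3 * Real.pi) + I / 2)
    (Q : ℂ → ℂ)
    (hQ : ∀ w : ℂ, Q w =
      ((I - m₁) / 3) * Complex.coth ((w - p₁) / 3)
      - (m₂ / 3) * Complex.coth ((w - p₁ - Real.pi * I) / 3)
      - (m₃ / 3) * Complex.coth ((w - p₁ + Real.pi * I) / 3)
      - ((I - m₁) / 3) * Complex.coth ((w + p₁ - Real.pi * I) / 3)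
      + (m₂ / 3) * Complex.coth ((w + p₁) / 3)
      + (m₃ / 3) * Complex.coth ((w + p₁ + Real.pi * I) / 3)) :
    Tendsto (fun w => (w - (-p₁)) * (m w + Q w)) (𝓝[≠] (-p₁)) (𝓝 0) ∧
    Tendsto (fun w => (w - (p₁ + Real.pi * I)) * (m w + Q w))
      (𝓝[≠] (p₁ + Real.pi * I)) (𝓝 0) ∧
    Tendsto (fun w => (w - (p₁ - Real.pi * I)) * (m w + Q w))
      (𝓝[≠] (p₁ - Real.pi * I)) (𝓝 0) ∧
    Tendsto (fun w => (w - (-p₁ + 2 * Real.pi * I)) * (m w + Q w))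
      (𝓝[≠] (-p₁ + 2 * Real.pi * I)) (𝓝 0) := by
  have hω0 : ω ≠ 0 := by
    rintro rfl; simp at hω
  have hk0 : (k : ℂ) ≠ 0 := Complex.ofReal_ne_zero.mpr (ne_of_gt hk)
  have hπ : (Real.pi : ℂ) ≠ 0 := Complex.ofReal_ne_zero.mpr Real.pi_ne_zero
  have hm' : ∀ w : ℂ, m w = ((Real.pi + 2 * I * w) / (6 * Real.pi)) *
      (I * ω ^ 2 * Complex.sinh (2 * w) / (ω ^ 2 * (Complex.sinh w) ^ 2 + (k : ℂ) ^ 2)) := by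
    intro w; rw [hm, hG₂]
  have hsπ : Complex.sinh ((Real.pi : ℂ) * I) = 0 := by
    rw [Complex.sinh_mul_I]; simp
  have hcπ : Complex.cosh ((Real.pi : ℂ) * I) = -1 := by
    rw [Complex.cosh_mul_I]; simp
  have hs2π : Complex.sinh (2 * (Real.pi : ℂ) * I) = 0 := by
    rw [Complex.sinh_mul_I, Complex.sin_two_mul]; simp
  have hc2π : Complex.cosh (2 * (Real.pi : ℂ) * I) = 1 := by
    rw [Complex.cosh_mul_I, Complex.cos_two_mul]; simp; norm_num
  have hsv : Complex.sinh p₁ ≠ 0 := by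
    rw [hp]; exact div_ne_zero (mul_ne_zero Complex.I_ne_zero hk0) hω0
  have hB1 : Complex.sinh (((Real.pi / 3 : ℝ) : ℂ) * I) ≠ 0 :=
    sinh_I_pi_ne (by positivity) (by linarith [Real.pi_pos])
  have hB2 : Complex.sinh (((2 * Real.pi / 3 : ℝ) : ℂ) * I) ≠ 0 :=
    sinh_I_pi_ne (by positivity) (by linarith [Real.pi_pos])
  -- denominator vanishing for sinh a = ± I k / ω
  have hden : ∀ s : ℂ, (s = I * k / ω ∨ s = -(I * k / ω)) →
      ω ^ 2 * s ^ 2 + (k : ℂ) ^ 2 = 0 := by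
    rintro s (rfl | rfl)
    · field_simp; ring_nf; simp [Complex.I_sq]
    · rw [neg_pow]; field_simp; ring_nf; simp [Complex.I_sq]
  -- master step
  have main : ∀ a : ℂ, ω ^ 2 * (Complex.sinh a) ^ 2 + (k : ℂ) ^ 2 = 0 →
      Complex.sinh a ≠ 0 → Complex.cosh a ≠ 0 →
      ∀ v1 v2 v3 v4 v5 v6 : ℂ,
      Tendsto (fun w => (w - a) * (((I - m₁) / 3) * Complex.coth ((w - p₁) / 3)))
        (𝓝[≠] a) (𝓝 v1) →
      Tendsto (fun w => (w - a) * ((m₂ / 3) * Complex.coth ((w - p₁ - Real.pi * I) / 3)))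
        (𝓝[≠] a) (𝓝 v2) →
      Tendsto (fun w => (w - a) * ((m₃ / 3) * Complex.coth ((w - p₁ + Real.pi * I) / 3)))
        (𝓝[≠] a) (𝓝 v3) →
      Tendsto (fun w => (w - a) * (((I - m₁) / 3) * Complex.coth ((w + p₁ - Real.pi * I) / 3)))
        (𝓝[≠] a) (𝓝 v4) →
      Tendsto (fun w => (w - a) * ((m₂ / 3) * Complex.coth ((w + p₁) / 3)))
        (𝓝[≠] a) (𝓝 v5) →
      Tendsto (fun w => (w - a) * ((m₃ / 3) * Complex.coth ((w + p₁ + Real.pi * I) / 3)))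
        (𝓝[≠] a) (𝓝 v6) →
      I * ((Real.pi : ℂ) + 2 * I * a) / (6 * Real.pi) + v1 - v2 - v3 - v4 + v5 + v6 = 0 →
      Tendsto (fun w => (w - a) * (m w + Q w)) (𝓝[≠] a) (𝓝 0) := by
    intro a ha hs hcc v1 v2 v3 v4 v5 v6 T1 T2 T3 T4 T5 T6 hz
    have Tm := m_lim ω k hω0 m hm' a ha hs hcc
    have combined := (((((Tm.add T1).sub T2).sub T3).sub T4).add T5).add T6
    rw [hz] at combined
    refine combined.congr fun w => ?_
    rw [hQ]
    ring
  refine ⟨?_, ?_, ?_, ?_⟩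
  -- point a = -p₁
  · have hs1 : Complex.sinh (-p₁) = -(I * k / ω) := by rw [Complex.sinh_neg, hp]
    refine main (-p₁) (by rw [hs1]; exact hden _ (Or.inr rfl))
      (by rw [hs1]; simpa using (div_ne_zero (mul_ne_zero Complex.I_ne_zero hk0) hω0))
      (by rw [Complex.cosh_neg]; exact hc) 0 0 0 0 (3 * (m₂ / 3)) 0
      ?_ ?_ ?_ ?_ ?_ ?_ ?_
    · exact coth_lim_reg _ _ p₁ _ (fun w => rfl)
        (sinh_ne_A p₁ hre (-2) 0 (by norm_num) _ (by push_cast; ring))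
    · exact coth_lim_reg _ _ (p₁ + Real.pi * I) _ (fun w => by ring)
        (sinh_ne_A p₁ hre (-2) (-Real.pi) (by norm_num) _ (by push_cast; ring))
    · exact coth_lim_reg _ _ (p₁ - Real.pi * I) _ (fun w => by ring)
        (sinh_ne_A p₁ hre (-2) Real.pi (by norm_num) _ (by push_cast; ring))
    · refine coth_lim_reg _ _ (-p₁ + Real.pi * I) _ (fun w => by ring) ?_
      rw [show ((-p₁ : ℂ) - (-p₁ + Real.pi * I)) / 3 = -(((Real.pi / 3 : ℝ) : ℂ) * I) by
        push_cast; ring, Complex.sinh_neg, neg_ne_zero]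
      exact hB1
    · refine coth_lim_sing _ _ (-p₁) _ (fun w => by ring) ?_
      rw [show ((-p₁ : ℂ) - (-p₁)) / 3 = 0 by ring]
      exact Complex.sinh_zero
    · refine coth_lim_reg _ _ (-p₁ - Real.pi * I) _ (fun w => by ring) ?_
      rw [show ((-p₁ : ℂ) - (-p₁ - Real.pi * I)) / 3 = ((Real.pi / 3 : ℝ) : ℂ) * I by
        push_cast; ring]
      exact hB1
    · rw [hm₂]; field_simp; ring_nf; simp [Complex.I_sq]
  -- point a = p₁ + πI
  · have hs2 : Complex.sinh (p₁ + Real.pi * I) = -(I * k / ω) := by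
      rw [Complex.sinh_add, hsπ, hcπ, hp]; ring
    have hc2 : Complex.cosh (p₁ + Real.pi * I) = -Complex.cosh p₁ := by
      rw [Complex.cosh_add, hsπ, hcπ]; ring
    refine main (p₁ + Real.pi * I) (by rw [hs2]; exact hden _ (Or.inr rfl))
      (by rw [hs2]; simpa using (div_ne_zero (mul_ne_zero Complex.I_ne_zero hk0) hω0))
      (by rw [hc2]; simpa using hc) 0 (3 * (m₂ / 3)) 0 0 0 0
      ?_ ?_ ?_ ?_ ?_ ?_ ?_
    · refine coth_lim_reg _ _ p₁ _ (fun w => rfl) ?_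
      rw [show ((p₁ + Real.pi * I : ℂ) - p₁) / 3 = ((Real.pi / 3 : ℝ) : ℂ) * I by
        push_cast; ring]
      exact hB1
    · refine coth_lim_sing _ _ (p₁ + Real.pi * I) _ (fun w => by ring) ?_
      rw [show ((p₁ + Real.pi * I : ℂ) - (p₁ + Real.pi * I)) / 3 = 0 by ring]
      exact Complex.sinh_zero
    · refine coth_lim_reg _ _ (p₁ - Real.pi * I) _ (fun w => by ring) ?_
      rw [show ((p₁ + Real.pi * I : ℂ) - (p₁ - Real.pi * I)) / 3 = ((2 * Real.pi / 3 : ℝ) : ℂ) * I by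
        push_cast; ring]
      exact hB2
    · exact coth_lim_reg _ _ (-p₁ + Real.pi * I) _ (fun w => by ring)
        (sinh_ne_A p₁ hre 2 0 (by norm_num) _ (by push_cast; ring))
    · exact coth_lim_reg _ _ (-p₁) _ (fun w => by ring)
        (sinh_ne_A p₁ hre 2 Real.pi (by norm_num) _ (by push_cast; ring))
    · exact coth_lim_reg _ _ (-p₁ - Real.pi * I) _ (fun w => by ring)
        (sinh_ne_A p₁ hre 2 (2 * Real.pi) (by norm_num) _ (by push_cast; ring))
    · rw [hm₂]; field_simp; ring_nf
      linear_combination (6 * p₁ + 6 * ((Real.pi : ℂ)) * I) * Complex.I_sq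
  -- point a = p₁ - πI
  · have hs3 : Complex.sinh (p₁ - Real.pi * I) = -(I * k / ω) := by
      rw [Complex.sinh_sub, hsπ, hcπ, hp]; ring
    have hc3 : Complex.cosh (p₁ - Real.pi * I) = -Complex.cosh p₁ := by
      rw [Complex.cosh_sub, hsπ, hcπ]; ring
    refine main (p₁ - Real.pi * I) (by rw [hs3]; exact hden _ (Or.inr rfl))
      (by rw [hs3]; simpa using (div_ne_zero (mul_ne_zero Complex.I_ne_zero hk0) hω0))
      (by rw [hc3]; simpa using hc) 0 0 (3 * (m₃ / 3)) 0 0 0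
      ?_ ?_ ?_ ?_ ?_ ?_ ?_
    · refine coth_lim_reg _ _ p₁ _ (fun w => rfl) ?_
      rw [show ((p₁ - Real.pi * I : ℂ) - p₁) / 3 = -(((Real.pi / 3 : ℝ) : ℂ) * I) by
        push_cast; ring, Complex.sinh_neg, neg_ne_zero]
      exact hB1
    · refine coth_lim_reg _ _ (p₁ + Real.pi * I) _ (fun w => by ring) ?_
      rw [show ((p₁ - Real.pi * I : ℂ) - (p₁ + Real.pi * I)) / 3 = -(((2 * Real.pi / 3 : ℝ) : ℂ) * I) by
        push_cast; ring, Complex.sinh_neg, neg_ne_zero]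
      exact hB2
    · refine coth_lim_sing _ _ (p₁ - Real.pi * I) _ (fun w => by ring) ?_
      rw [show ((p₁ - Real.pi * I : ℂ) - (p₁ - Real.pi * I)) / 3 = 0 by ring]
      exact Complex.sinh_zero
    · exact coth_lim_reg _ _ (-p₁ + Real.pi * I) _ (fun w => by ring)
        (sinh_ne_A p₁ hre 2 (-(2 * Real.pi)) (by norm_num) _ (by push_cast; ring))
    · exact coth_lim_reg _ _ (-p₁) _ (fun w => by ring)
        (sinh_ne_A p₁ hre 2 (-Real.pi) (by norm_num) _ (by push_cast; ring))
    · exact coth_lim_reg _ _ (-p₁ - Real.pi * I) _ (fun w => by ring)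
        (sinh_ne_A p₁ hre 2 0 (by norm_num) _ (by push_cast; ring))
    · rw [hm₃]; field_simp; ring_nf
      linear_combination (12 * p₁ - 12 * ((Real.pi : ℂ)) * I) * Complex.I_sq
  -- point a = -p₁ + 2πI
  · have hs4 : Complex.sinh (-p₁ + 2 * Real.pi * I) = -(I * k / ω) := by
      rw [Complex.sinh_add, Complex.sinh_neg, Complex.cosh_neg, hs2π, hc2π, hp]; ring
    have hc4 : Complex.cosh (-p₁ + 2 * Real.pi * I) = Complex.cosh p₁ := by
      rw [Complex.cosh_add, Complex.sinh_neg, Complex.cosh_neg, hs2π, hc2π]; ring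
    refine main (-p₁ + 2 * Real.pi * I) (by rw [hs4]; exact hden _ (Or.inr rfl))
      (by rw [hs4]; simpa using (div_ne_zero (mul_ne_zero Complex.I_ne_zero hk0) hω0))
      (by rw [hc4]; exact hc) 0 0 0 0 0 (3 * (m₃ / 3))
      ?_ ?_ ?_ ?_ ?_ ?_ ?_
    · exact coth_lim_reg _ _ p₁ _ (fun w => rfl)
        (sinh_ne_A p₁ hre (-2) (2 * Real.pi) (by norm_num) _ (by push_cast; ring))
    · exact coth_lim_reg _ _ (p₁ + Real.pi * I) _ (fun w => by ring)
        (sinh_ne_A p₁ hre (-2) Real.pi (by norm_num) _ (by push_cast; ring))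
    · exact coth_lim_reg _ _ (p₁ - Real.pi * I) _ (fun w => by ring)
        (sinh_ne_A p₁ hre (-2) (3 * Real.pi) (by norm_num) _ (by push_cast; ring))
    · refine coth_lim_reg _ _ (-p₁ + Real.pi * I) _ (fun w => by ring) ?_
      rw [show ((-p₁ + 2 * Real.pi * I : ℂ) - (-p₁ + Real.pi * I)) / 3 = ((Real.pi / 3 : ℝ) : ℂ) * I by
        push_cast; ring]
      exact hB1
    · refine coth_lim_reg _ _ (-p₁) _ (fun w => by ring) ?_
      rw [show ((-p₁ + 2 * Real.pi * I : ℂ) - (-p₁)) / 3 = ((2 * Real.pi / 3 : ℝ) : ℂ) * I by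
        push_cast; ring]
      exact hB2
    · refine coth_lim_sing _ _ (-p₁ - Real.pi * I) _ (fun w => by ring) ?_
      rw [show ((-p₁ + 2 * Real.pi * I : ℂ) - (-p₁ - Real.pi * I)) / 3 = (Real.pi : ℂ) * I by
        push_cast; ring]
      exact hsπ
    · rw [hm₃]; field_simp; ring_nf
      linear_combination (-12 * p₁ + 24 * ((Real.pi : ℂ)) * I) * Complex.I_sq
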